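/- An integral domain R is a Dedekind domain if and only if every nonzero proper ideal of R is a finite product of molecules and every molecule of R is a prime ideal. -/

import Mathlib

open Ideal
open scoped nonZeroDivisors

section Aux

variable {S : Type*} [CommRing S] [IsDomain S]

/-- Naive invertibility of an ideal: some multiple is a nonzero principal ideal. -/
def MolInv (I : Ideal S) : Prop := ∃ (J : Ideal S) (a : S), a ≠ 0 ∧ I * J = Ideal.span {a}

lemma span_cancel_le {a : S} (ha : a ≠ 0) {A B : Ideal S}
    (h : Ideal.span {a} * A ≤ Ideal.span {a} * B) : A ≤ B := fun x hx => by
  have hmem : a * x ∈ Ideal.span {a} * B :=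
    h (Ideal.mul_mem_mul (Ideal.mem_span_singleton_self a) hx)
  obtain ⟨z, hz, hez⟩ := Ideal.mem_span_singleton_mul.mp hmem
  obtain rfl : z = x := mul_left_cancel₀ ha hez
  exact hz

lemma molInv_cancel {I A B : Ideal S} (hI : MolInv I) (h : I * A = I * B) : A = B := by
  obtain ⟨J, a, ha, hIJ⟩ := hI
  have h2 : Ideal.span {a} * A = Ideal.span {a} * B := by
    rw [← hIJ, mul_comm I J, mul_assoc, mul_assoc, h]
  exact le_antisymm (span_cancel_le ha h2.le) (span_cancel_le ha h2.ge)

lemma molInv_of_mem {t : Multiset (Ideal S)} {a : S} (ha : a ≠ 0)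
    (hp : t.prod = Ideal.span {a}) {Q : Ideal S} (hQ : Q ∈ t) : MolInv Q := by
  classical
  refine ⟨(t.erase Q).prod, a, ha, ?_⟩
  rw [← Multiset.prod_cons, Multiset.cons_erase hQ, hp]

lemma molInv_multiset_prod {s : Multiset (Ideal S)} (h : ∀ Q ∈ s, MolInv Q) :
    MolInv s.prod := by
  induction s using Multiset.induction with
  | empty =>
    exact ⟨⊤, 1, one_ne_zero, by simp [Ideal.span_singleton_one]⟩
  | cons I s ih =>
    obtain ⟨J, a, ha, hIJ⟩ := h I (Multiset.mem_cons_self I s)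
    obtain ⟨K, b, hb, hK⟩ := ih fun Q hQ => h Q (Multiset.mem_cons_of_mem hQ)
    refine ⟨J * K, a * b, mul_ne_zero ha hb, ?_⟩
    rw [Multiset.prod_cons, show I * s.prod * (J * K) = I * J * (s.prod * K) by ring,
      hIJ, hK, Ideal.span_singleton_mul_span_singleton]

/-- Uniqueness of factorization into invertible prime ideals, auxiliary version. -/
lemma unique_factorization_aux :
    ∀ (n : ℕ) (s t : Multiset (Ideal S)), Multiset.card s = n →
      (∀ P ∈ s, P.IsPrime ∧ MolInv P) → (∀ P ∈ t, P.IsPrime ∧ MolInv P) →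
      s.prod = t.prod → s = t := by
  classical
  intro n
  induction n with
  | zero =>
    intro s t hcard _ ht h
    obtain rfl : s = 0 := Multiset.card_eq_zero.mp hcard
    rw [Multiset.prod_zero] at h
    symm
    rw [Multiset.eq_zero_iff_forall_notMem]
    intro Q hQ
    have h1 : t.prod ≤ Q := Ideal.multiset_prod_le_inf.trans (Multiset.inf_le hQ)
    rw [← h] at h1
    exact (ht Q hQ).1.ne_top (top_le_iff.mp (le_trans (by rw [Ideal.one_eq_top]) h1))
  | succ n ih =>
    intro s t hcard hs ht h
    have hsne : s ≠ 0 := by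
      intro h0; rw [h0] at hcard; simp at hcard
    obtain ⟨x, hx⟩ := Multiset.exists_mem_of_ne_zero hsne
    obtain ⟨P, hPs : P ∈ s, hmin'⟩ :=
      Set.Finite.exists_minimal (s := {I | I ∈ s}) s.finite_toSet ⟨x, hx⟩
    have hmin : ∀ P' ∈ s, P' ≤ P → P = P' := fun P' h hle => le_antisymm (hmin' h hle) hle
    have hP := hs P hPs
    have h1 : t.prod ≤ P := by
      rw [← h]; exact Ideal.multiset_prod_le_inf.trans (Multiset.inf_le hPs)
    obtain ⟨Q, hQt, hQP⟩ := hP.1.multiset_prod_le.mp h1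
    have hQ := ht Q hQt
    have h2 : s.prod ≤ Q := by
      rw [h]; exact Ideal.multiset_prod_le_inf.trans (Multiset.inf_le hQt)
    obtain ⟨P', hP's, hP'Q⟩ := hQ.1.multiset_prod_le.mp h2
    have hPP' : P = P' := hmin P' hP's (le_trans hP'Q hQP)
    obtain rfl : Q = P := le_antisymm hQP (hPP' ▸ hP'Q)
    have hserase := Multiset.cons_erase hPs
    have hterase := Multiset.cons_erase hQt
    have hprod : Q * (s.erase Q).prod = Q * (t.erase Q).prod := by
      have e1 : Q * (s.erase Q).prod = s.prod := by rw [← Multiset.prod_cons, hserase]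
      have e2 : Q * (t.erase Q).prod = t.prod := by rw [← Multiset.prod_cons, hterase]
      rw [e1, e2, h]
    have hcard' : Multiset.card (s.erase Q) = n := by
      rw [Multiset.card_erase_of_mem hPs, hcard]; rfl
    have herase := ih (s.erase Q) (t.erase Q) hcard'
      (fun R hR => hs R (Multiset.mem_of_mem_erase hR))
      (fun R hR => ht R (Multiset.mem_of_mem_erase hR))
      (molInv_cancel hQ.2 hprod)
    rw [← hserase, ← hterase, herase]

lemma unique_factorization {s t : Multiset (Ideal S)}
    (hs : ∀ P ∈ s, P.IsPrime ∧ MolInv P) (ht : ∀ P ∈ t, P.IsPrime ∧ MolInv P)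
    (h : s.prod = t.prod) : s = t :=
  unique_factorization_aux _ s t rfl hs ht h

lemma map_multiset_prod' {R S : Type*} [CommRing R] [CommRing S] (f : R →+* S)
    (s : Multiset (Ideal R)) :
    Ideal.map f s.prod = (s.map (Ideal.map f)).prod := by
  induction s using Multiset.induction with
  | empty => simp [Ideal.one_eq_top, Ideal.map_top]
  | cons a s ih => simp [Ideal.map_mul, ih]

end Aux

section Matusita

variable {R : Type*} [CommRing R] [IsDomain R]

/-- An invertible nonzero prime ideal in a "molecular" domain is maximal. -/
lemma molInv_prime_isMaximal
    (hfac : ∀ I : Ideal R, I ≠ ⊥ → I ≠ ⊤ →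
      ∃ s : Multiset (Ideal R), (∀ J ∈ s, J.IsPrime) ∧ I = s.prod)
    {P : Ideal R} (hP : P.IsPrime) (hPinv : MolInv P) : P.IsMaximal := by
  have key : ∀ a : R, a ∉ P → P ⊔ Ideal.span {a} = ⊤ := by
    intro a haP
    by_contra hA
    set A := P ⊔ Ideal.span {a} with hAdef
    set B := P ⊔ Ideal.span {a ^ 2} with hBdef
    have ha0 : a ≠ 0 := fun h => haP (h ▸ P.zero_mem)
    have haA : a ∈ A := Submodule.mem_sup_right (Ideal.mem_span_singleton_self a)
    have hA0 : A ≠ ⊥ := fun h => ha0 (by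
      have := haA; rw [h] at this; simpa using this)
    have hBA : B ≤ A := sup_le le_sup_left
      (le_trans ((Ideal.span_singleton_le_iff_mem _).mpr (by
        rw [sq]; exact Ideal.mul_mem_left _ a (Ideal.mem_span_singleton_self a))) le_sup_right)
    have hBtop : B ≠ ⊤ := fun h => hA (top_le_iff.mp (h ▸ hBA))
    have hB0 : B ≠ ⊥ := fun h => (pow_ne_zero 2 ha0) (by
      have h2 : (a ^ 2 : R) ∈ B := Submodule.mem_sup_right (Ideal.mem_span_singleton_self _)
      rw [h] at h2; simpa using h2)
    obtain ⟨s, hsprime, hsA⟩ := hfac A hA0 hA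
    obtain ⟨t, htprime, htB⟩ := hfac B hB0 hBtop
    have hPles : ∀ J ∈ s, P ≤ J := fun J hJ =>
      le_trans le_sup_left (hsA ▸ (Ideal.multiset_prod_le_inf.trans (Multiset.inf_le hJ)))
    have hPlet : ∀ J ∈ t, P ≤ J := fun J hJ =>
      le_trans le_sup_left (htB ▸ (Ideal.multiset_prod_le_inf.trans (Multiset.inf_le hJ)))
    set π := Ideal.Quotient.mk P with hπdef
    have hπs : Function.Surjective π := Ideal.Quotient.mk_surjective
    have hker : RingHom.ker π = P := Ideal.mk_ker
    have hπa0 : π a ≠ 0 := fun h => haP (Ideal.Quotient.eq_zero_iff_mem.mp h)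
    have hmapA : Ideal.map π A = Ideal.span {π a} := by
      rw [hAdef, Ideal.map_sup, Ideal.map_quotient_self, Ideal.map_span, bot_sup_eq,
        Set.image_singleton]
    have hmapB : Ideal.map π B = Ideal.span {π a} * Ideal.span {π a} := by
      rw [hBdef, Ideal.map_sup, Ideal.map_quotient_self, Ideal.map_span, bot_sup_eq,
        Set.image_singleton, Ideal.span_singleton_mul_span_singleton,
        show (π (a ^ 2)) = π a * π a from by rw [sq, _root_.map_mul]]
    set s' := s.map (Ideal.map π) with hs'def
    set t' := t.map (Ideal.map π) with ht'def
    have hprods' : s'.prod = Ideal.span {π a} := by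
      rw [hs'def, ← map_multiset_prod', ← hsA, hmapA]
    have hprodt' : t'.prod = Ideal.span {π a} * Ideal.span {π a} := by
      rw [ht'def, ← map_multiset_prod', ← htB, hmapB]
    have hprimes' : ∀ Q ∈ s' + s', Q.IsPrime ∧ MolInv Q := by
      intro Q hQ
      have hQ' : Q ∈ s' := by
        rcases Multiset.mem_add.mp hQ with h | h <;> exact h
      obtain ⟨J, hJs, rfl⟩ := Multiset.mem_map.mp hQ'
      haveI := hsprime J hJs
      constructor
      · exact Ideal.map_isPrime_of_surjective hπs (by rw [hker]; exact hPles J hJs)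
      · exact molInv_of_mem hπa0 hprods' hQ'
    have hprimet' : ∀ Q ∈ t', Q.IsPrime ∧ MolInv Q := by
      intro Q hQ
      obtain ⟨J, hJt, rfl⟩ := Multiset.mem_map.mp hQ
      haveI := htprime J hJt
      refine ⟨Ideal.map_isPrime_of_surjective hπs (by rw [hker]; exact hPlet J hJt), ?_⟩
      refine molInv_of_mem (a := π a * π a) (mul_ne_zero hπa0 hπa0) ?_ hQ
      rw [hprodt', Ideal.span_singleton_mul_span_singleton]
    have hst' : t' = s' + s' := by
      refine unique_factorization hprimet' hprimes' ?_
      rw [hprodt', Multiset.prod_add, hprods']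
    -- pull the multiset equality back to R
    have hcomap : ∀ J : Ideal R, P ≤ J → Ideal.comap π (Ideal.map π J) = J := by
      intro J hPJ
      rw [Ideal.comap_map_of_surjective π hπs, ← RingHom.ker_eq_comap_bot, hker,
        sup_eq_left.mpr hPJ]
    have hts : t = s + s := by
      have e1 : t.map (Ideal.comap π ∘ Ideal.map π) = t := by
        have h1 := Multiset.map_congr (f := Ideal.comap π ∘ Ideal.map π) (g := id) rfl
          (fun J hJ => by simpa using hcomap J (hPlet J hJ))
        rwa [Multiset.map_id] at h1
      have e2 : (s + s).map (Ideal.comap π ∘ Ideal.map π) = s + s := by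
        have h2 := Multiset.map_congr (f := Ideal.comap π ∘ Ideal.map π) (g := id) rfl
          (fun J hJ => by
            simpa using hcomap J (hPles J (by
              rcases Multiset.mem_add.mp hJ with h | h <;> exact h)))
        rwa [Multiset.map_id] at h2
      calc t = t.map (Ideal.comap π ∘ Ideal.map π) := e1.symm
        _ = (t.map (Ideal.map π)).map (Ideal.comap π) := (Multiset.map_map _ _ _).symm
        _ = ((s + s).map (Ideal.map π)).map (Ideal.comap π) := by
              rw [← ht'def, Multiset.map_add, ← hs'def, hst']
        _ = (s + s).map (Ideal.comap π ∘ Ideal.map π) := Multiset.map_map _ _ _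
        _ = s + s := e2
    have hBAA : B = A * A := by
      rw [htB, hts, Multiset.prod_add, ← hsA]
    have hAA_le : A * A ≤ P * P ⊔ Ideal.span {a} := by
      rw [hAdef, Ideal.sup_mul, Ideal.mul_sup, Ideal.mul_sup]
      refine sup_le (sup_le le_sup_left ?_) (sup_le ?_ ?_)
      · exact le_trans Ideal.mul_le_right le_sup_right
      · exact le_trans Ideal.mul_le_left le_sup_right
      · exact le_trans Ideal.mul_le_left le_sup_right
    have hPlePA : P ≤ P * A := by
      intro p hp
      have hpB : p ∈ P * P ⊔ Ideal.span {a} := by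
        refine hAA_le ?_
        rw [← hBAA]
        exact Submodule.mem_sup_left hp
      obtain ⟨q, hq, r, hr, rfl⟩ := Submodule.mem_sup.mp hpB
      obtain ⟨c, rfl⟩ := Ideal.mem_span_singleton'.mp hr
      have hqP : q ∈ P := Ideal.mul_le_left hq
      have hcaP : c * a ∈ P := by
        have := P.sub_mem hp hqP
        simpa using this
      have hcP : c ∈ P := (hP.mem_or_mem hcaP).resolve_right haP
      refine Submodule.add_mem _ ?_ ?_
      · exact Ideal.mul_mono_right le_sup_left hq
      · exact Ideal.mul_mem_mul hcP haA
    have hPA : P * A = P * ⊤ := by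
      rw [Ideal.mul_top]
      exact le_antisymm (Ideal.mul_le_left) hPlePA
    exact hA (molInv_cancel hPinv hPA)
  constructor
  constructor
  · exact hP.ne_top
  · intro I hI
    obtain ⟨b, hbI, hbP⟩ := SetLike.exists_of_lt hI
    exact top_le_iff.mp
      ((key b hbP) ▸ sup_le hI.le ((Ideal.span_singleton_le_iff_mem _).mpr hbI))

end Matusita

/-- A domain is Dedekind iff it is molecular and every molecule is prime. -/
theorem stmt_13 {R : Type*} [CommRing R] [IsDomain R] :
    IsDedekindDomain R ↔
      ((∀ I : Ideal R, I ≠ ⊥ → I ≠ ⊤ →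
          ∃ s : Multiset (Ideal R),
            (∀ J ∈ s, J ≠ ⊥ ∧ J ≠ ⊤ ∧
              ∀ A B : Ideal R, J = A * B → A = ⊤ ∨ B = ⊤) ∧ I = s.prod) ∧
        (∀ J : Ideal R, J ≠ ⊥ → J ≠ ⊤ →
          (∀ A B : Ideal R, J = A * B → A = ⊤ ∨ B = ⊤) → J.IsPrime)) := by
  constructor
  · -- Dedekind ⇒ molecular and molecules prime
    intro hDD
    have hmolec : ∀ J : Ideal R, Prime J → ∀ A B : Ideal R, J = A * B → A = ⊤ ∨ B = ⊤ := by
      intro J hJ A B hAB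
      have hdvd : J ∣ A * B := hAB ▸ dvd_rfl
      rcases hJ.2.2 A B hdvd with ⟨C, hC⟩ | ⟨C, hC⟩
      · right
        have heq : J * 1 = J * (C * B) := by
          calc J * 1 = J := mul_one J
            _ = A * B := hAB
            _ = J * C * B := by rw [hC]
            _ = J * (C * B) := mul_assoc _ _ _
        have h1 : (1 : Ideal R) = C * B := mul_left_cancel₀ hJ.ne_zero heq
        exact Ideal.isUnit_iff.mp (IsUnit.of_mul_eq_one (a := B) C (by rw [mul_comm, ← h1]))
      · left
        have heq : J * 1 = J * (C * A) := by
          calc J * 1 = J := mul_one J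
            _ = A * B := hAB
            _ = A * (J * C) := by rw [hC]
            _ = J * (C * A) := by ring
        have h1 : (1 : Ideal R) = C * A := mul_left_cancel₀ hJ.ne_zero heq
        exact Ideal.isUnit_iff.mp (IsUnit.of_mul_eq_one (a := A) C (by rw [mul_comm, ← h1]))
    have hfactor : ∀ I : Ideal R, I ≠ ⊥ →
        ∃ s : Multiset (Ideal R), (∀ J ∈ s, Prime J) ∧ I = s.prod := by
      intro I h0
      obtain ⟨s, hs, hassoc⟩ :=
        UniqueFactorizationMonoid.exists_prime_factors I (by rwa [Ne, Ideal.zero_eq_bot])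
      exact ⟨s, hs, (associated_iff_eq.mp hassoc).symm⟩
    constructor
    · intro I h0 htop
      obtain ⟨s, hs, hI⟩ := hfactor I h0
      refine ⟨s, fun J hJ => ?_, hI⟩
      have hJp := hs J hJ
      exact ⟨by rw [Ne, ← Ideal.zero_eq_bot]; exact hJp.ne_zero,
        fun h => hJp.not_unit (h ▸ Ideal.isUnit_iff.mpr rfl), hmolec J hJp⟩
    · intro J h0 htop hmol
      obtain ⟨s, hs, hJ⟩ := hfactor J h0
      rcases Multiset.empty_or_exists_mem s with rfl | ⟨Q, hQ⟩
      · exact absurd (by simpa [Ideal.one_eq_top] using hJ) htop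
      · obtain ⟨s', rfl⟩ := Multiset.exists_cons_of_mem hQ
        rw [Multiset.prod_cons] at hJ
        rcases hmol Q s'.prod hJ with h | h
        · exact absurd (h ▸ Ideal.isUnit_iff.mpr rfl) (hs Q hQ).not_unit
        · rw [hJ, h, mul_top]
          exact Ideal.isPrime_of_prime (hs Q hQ)
  · -- molecular + molecules prime ⇒ Dedekind
    rintro ⟨hmol, hmolprime⟩
    have hfac : ∀ I : Ideal R, I ≠ ⊥ → I ≠ ⊤ →
        ∃ s : Multiset (Ideal R), (∀ J ∈ s, J.IsPrime) ∧ I = s.prod := by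
      intro I h0 ht
      obtain ⟨s, hmem, hI⟩ := hmol I h0 ht
      exact ⟨s, fun J hJ =>
        hmolprime J (hmem J hJ).1 (hmem J hJ).2.1 (hmem J hJ).2.2, hI⟩
    -- every nonzero prime ideal is invertible
    have hprimeinv : ∀ P : Ideal R, P.IsPrime → P ≠ ⊥ → MolInv P := by
      intro P hP hP0
      obtain ⟨a, haP, ha0⟩ := (Submodule.ne_bot_iff P).mp hP0
      have hspan0 : Ideal.span {a} ≠ ⊥ := by
        rwa [Ne, Ideal.span_singleton_eq_bot]
      have hspanle : Ideal.span {a} ≤ P := (Ideal.span_singleton_le_iff_mem _).mpr haP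
      have hspantop : Ideal.span {a} ≠ ⊤ := fun h =>
        hP.ne_top (top_le_iff.mp (h ▸ hspanle))
      obtain ⟨s, hsp, hsa⟩ := hfac (Ideal.span {a}) hspan0 hspantop
      have hle : s.prod ≤ P := hsa ▸ hspanle
      obtain ⟨Q, hQs, hQP⟩ := hP.multiset_prod_le.mp hle
      have hQinv : MolInv Q := molInv_of_mem ha0 hsa.symm hQs
      have hQmax := molInv_prime_isMaximal hfac (hsp Q hQs) hQinv
      obtain rfl : Q = P := hQmax.eq_of_le hP.ne_top hQP
      exact hQinv
    -- every nonzero ideal is invertible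
    have hallinv : ∀ I : Ideal R, I ≠ ⊥ → MolInv I := by
      intro I h0
      by_cases ht : I = ⊤
      · exact ⟨⊤, 1, one_ne_zero, by simp [ht, Ideal.span_singleton_one]⟩
      obtain ⟨s, hsp, hI⟩ := hfac I h0 ht
      rw [hI]
      refine molInv_multiset_prod fun Q hQ => ?_
      have hQ0 : Q ≠ ⊥ := by
        rintro rfl
        exact h0 (by
          rw [hI]
          exact le_bot_iff.mp (Ideal.multiset_prod_le_inf.trans (Multiset.inf_le hQ)))
      exact hprimeinv Q (hsp Q hQ) hQ0
    -- conclude via fractional ideals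
    apply (isDedekindDomain_iff_mul_inv_cancel (K := FractionRing R)).mpr
    intro I hI0
    rw [FractionalIdeal.mul_inv_cancel_iff]
    obtain ⟨a, aI, ha, rfl⟩ := FractionalIdeal.exists_eq_spanSingleton_mul I
    set K := FractionRing R
    have hxa : algebraMap R K a ≠ 0 :=
      fun h => ha (IsFractionRing.to_map_eq_zero_iff.mp h)
    have haI0 : aI ≠ ⊥ := by
      rintro rfl
      simp at hI0
    obtain ⟨J, b, hb, hJ⟩ := hallinv aI haI0
    have hxb : algebraMap R K b ≠ 0 :=
      fun h => hb (IsFractionRing.to_map_eq_zero_iff.mp h)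
    refine ⟨FractionalIdeal.spanSingleton R⁰ (algebraMap R K a) *
      (↑J * (FractionalIdeal.spanSingleton R⁰ (algebraMap R K b))⁻¹), ?_⟩
    have hcoe : (↑aI : FractionalIdeal R⁰ K) * ↑J =
        FractionalIdeal.spanSingleton R⁰ (algebraMap R K b) := by
      rw [← FractionalIdeal.coeIdeal_mul, hJ, FractionalIdeal.coeIdeal_span_singleton]
    calc FractionalIdeal.spanSingleton R⁰ (algebraMap R K a)⁻¹ * ↑aI *
          (FractionalIdeal.spanSingleton R⁰ (algebraMap R K a) *
            (↑J * (FractionalIdeal.spanSingleton R⁰ (algebraMap R K b))⁻¹))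
        = (FractionalIdeal.spanSingleton R⁰ (algebraMap R K a)⁻¹ *
            FractionalIdeal.spanSingleton R⁰ (algebraMap R K a)) *
          ((↑aI * ↑J) * (FractionalIdeal.spanSingleton R⁰ (algebraMap R K b))⁻¹) := by ring
      _ = 1 := by
          rw [FractionalIdeal.spanSingleton_mul_spanSingleton, inv_mul_cancel₀ hxa,
            FractionalIdeal.spanSingleton_one, one_mul, hcoe,
            FractionalIdeal.spanSingleton_inv, FractionalIdeal.spanSingleton_mul_spanSingleton,
            mul_inv_cancel₀ hxb, FractionalIdeal.spanSingleton_one]
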